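/- Suppose f_θ(X) | {Y = y} ∼ N(μ_y, σ_y²) for y ∈ {−1,+1}, the label marginals p(y) are known with p(Y=1) ≠ p(Y=-1), and L is the exponential loss, log loss, or hinge loss. If (μ̂⁽ⁿ⁾, σ̂⁽ⁿ⁾) → (μ, σ) almost surely, then the plug-in risk estimate R̂_n(θ) = ∑_{y ∈ {−1,+1}} p(y) ∫_ℝ N(α; μ̂_y⁽ⁿ⁾, (σ̂_y⁽ⁿ⁾)²) L(y, α) dα converges almost surely to the true risk R(θ) = ∑_y p(y) ∫_ℝ N(α; μ_y, σ_y²) L(y, α) dα. -/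
import Mathlib


open MeasureTheory ProbabilityTheory Filter Real

/-- Univariate Gaussian density with mean `μ` and standard deviation `σ`. -/
noncomputable def gaussDensity (μ σ x : ℝ) : ℝ :=
  (Real.sqrt (2 * Real.pi * σ ^ 2))⁻¹ * Real.exp (-(x - μ) ^ 2 / (2 * σ ^ 2))

/-- Margin-based risk under Gaussian class-conditional margin distributions with
parameters `η = (μ₁, μ₋₁, σ₁, σ₋₁)` and loss `L`. -/
noncomputable def gaussRisk (p1 pm1 : ℝ) (L : ℝ → ℝ → ℝ) (η : ℝ × ℝ × ℝ × ℝ) : ℝ :=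
  p1 * (∫ α : ℝ, gaussDensity η.1 η.2.2.1 α * L 1 α)
    + pm1 * (∫ α : ℝ, gaussDensity η.2.1 η.2.2.2 α * L (-1) α)

lemma gaussDensity_nonneg (μ σ x : ℝ) : 0 ≤ gaussDensity μ σ x := by
  unfold gaussDensity
  positivity

lemma continuous_gaussDensity (μ σ : ℝ) : Continuous (fun x => gaussDensity μ σ x) := by
  unfold gaussDensity
  fun_prop

-- Key continuity lemma: the Gaussian-weighted integral of a continuous function with
-- exponential growth is continuous in the mean and standard deviation, at positive σ.
set_option maxHeartbeats 1000000 in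
lemma contAt_gauss_integral (f : ℝ → ℝ) (hf : Continuous f)
    (hbd : ∀ α, |f α| ≤ 2 * Real.exp |α|) (μ0 σ0 : ℝ) (hσ : 0 < σ0) :
    ContinuousAt (fun q : ℝ × ℝ => ∫ α : ℝ, gaussDensity q.1 q.2 α * f α) (μ0, σ0) := by
  set K : ℝ := 2 * (Real.sqrt (2 * Real.pi * (σ0 / 2) ^ 2))⁻¹ *
      Real.exp (1 / (8 * σ0 ^ 2) + (|μ0| + 8 * σ0 ^ 2)) with hK
  apply continuousAt_of_dominated (bound := fun α => K * Real.exp (-(α - μ0) ^ 2 / (32 * σ0 ^ 2)))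
  · filter_upwards with q
    exact (((continuous_gaussDensity q.1 q.2).mul hf)).aestronglyMeasurable
  · -- the dominating bound
    have h1 : ∀ᶠ q : ℝ × ℝ in nhds (μ0, σ0), |q.1 - μ0| ≤ 1 := by
      have hev : ∀ᶠ x : ℝ in nhds μ0, |x - μ0| ≤ 1 := by
        filter_upwards [Metric.ball_mem_nhds μ0 one_pos] with x hx
        rw [Metric.mem_ball, Real.dist_eq] at hx
        linarith
      exact (continuous_fst.tendsto ((μ0, σ0) : ℝ × ℝ)).eventually hev
    have h2 : ∀ᶠ q : ℝ × ℝ in nhds (μ0, σ0), σ0 / 2 ≤ q.2 ∧ q.2 ≤ 2 * σ0 := by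
      have hev : ∀ᶠ x : ℝ in nhds σ0, σ0 / 2 ≤ x ∧ x ≤ 2 * σ0 := by
        filter_upwards [Metric.ball_mem_nhds σ0 (by positivity : (0:ℝ) < σ0 / 2)] with x hx
        rw [Metric.mem_ball, Real.dist_eq] at hx
        constructor <;> [linarith [abs_lt.mp hx]; linarith [abs_lt.mp hx]]
      exact (continuous_snd.tendsto ((μ0, σ0) : ℝ × ℝ)).eventually hev
    filter_upwards [h1, h2] with q hq1 hq2
    refine ae_of_all _ fun α => ?_
    obtain ⟨hσlo, hσhi⟩ := hq2
    set μ := q.1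
    set σ := q.2
    have hσpos : 0 < σ := lt_of_lt_of_le (by positivity) hσlo
    set t : ℝ := α - μ0 with ht
    set s : ℝ := μ - μ0 with hs
    have hs1 : s ^ 2 ≤ 1 := by
      have := abs_le.mp hq1
      nlinarith [this.1, this.2]
    have hσsq : σ ^ 2 ≤ 4 * σ0 ^ 2 := by nlinarith
    have hσsq' : σ0 ^ 2 / 4 ≤ σ ^ 2 := by nlinarith
    -- bound on the Gaussian density
    have hg : gaussDensity μ σ α ≤ (Real.sqrt (2 * Real.pi * (σ0 / 2) ^ 2))⁻¹ *
        (Real.exp (1 / (8 * σ0 ^ 2)) * Real.exp (-t ^ 2 / (16 * σ0 ^ 2))) := by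
      unfold gaussDensity
      have hA : (Real.sqrt (2 * Real.pi * σ ^ 2))⁻¹ ≤
          (Real.sqrt (2 * Real.pi * (σ0 / 2) ^ 2))⁻¹ := by
        apply inv_anti₀
        · apply Real.sqrt_pos.mpr
          positivity
        · apply Real.sqrt_le_sqrt
          nlinarith [Real.pi_pos]
      have hB : Real.exp (-(α - μ) ^ 2 / (2 * σ ^ 2)) ≤
          Real.exp (1 / (8 * σ0 ^ 2)) * Real.exp (-t ^ 2 / (16 * σ0 ^ 2)) := by
        rw [← Real.exp_add]
        apply Real.exp_le_exp.mpr
        have hαμ : α - μ = t - s := by rw [ht, hs]; ring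
        rw [hαμ]
        rw [div_add_div _ _ (by positivity : (8:ℝ) * σ0 ^ 2 ≠ 0) (by positivity : (16:ℝ) * σ0 ^ 2 ≠ 0),
          div_le_div_iff₀ (by positivity) (by positivity)]
        have hA2 : (0:ℝ) ≤ (16 * σ0 ^ 2 - 4 * σ ^ 2) * (t - s) ^ 2 :=
          mul_nonneg (by nlinarith) (sq_nonneg _)
        have hB2 : (0:ℝ) ≤ σ ^ 2 * ((t - 2 * s) ^ 2 + 2 - 2 * s ^ 2) :=
          mul_nonneg (sq_nonneg σ) (by nlinarith [sq_nonneg (t - 2 * s)])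
        nlinarith [sq_nonneg σ0, sq_nonneg σ, mul_pos (mul_pos hσpos hσpos) (mul_pos hσ hσ)]
      calc (Real.sqrt (2 * Real.pi * σ ^ 2))⁻¹ * Real.exp (-(α - μ) ^ 2 / (2 * σ ^ 2))
          ≤ (Real.sqrt (2 * Real.pi * (σ0 / 2) ^ 2))⁻¹ * Real.exp (-(α - μ) ^ 2 / (2 * σ ^ 2)) := by
            apply mul_le_mul_of_nonneg_right hA (Real.exp_nonneg _)
        _ ≤ _ := by
            apply mul_le_mul_of_nonneg_left hB (by positivity)
    -- bound on f
    have hfb : |f α| ≤ 2 * Real.exp (|μ0| + 8 * σ0 ^ 2) * Real.exp (t ^ 2 / (32 * σ0 ^ 2)) := by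
      refine le_trans (hbd α) ?_
      rw [mul_assoc, ← Real.exp_add]
      apply mul_le_mul_of_nonneg_left _ (by norm_num)
      apply Real.exp_le_exp.mpr
      have habs : |α| ≤ |μ0| + |t| := by
        have : α = μ0 + t := by rw [ht]; ring
        rw [this]
        exact abs_add_le μ0 t
      have htt : |t| ≤ 8 * σ0 ^ 2 + t ^ 2 / (32 * σ0 ^ 2) := by
        have hkey : (|t| - 8 * σ0 ^ 2) * (32 * σ0 ^ 2) ≤ t ^ 2 := by
          nlinarith [sq_nonneg (|t| - 16 * σ0 ^ 2), sq_abs t]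
        have := (le_div_iff₀ (by positivity : (0:ℝ) < 32 * σ0 ^ 2)).mpr hkey
        linarith
      linarith
    -- combine
    have hcomb : gaussDensity μ σ α * |f α| ≤
        K * Real.exp (-t ^ 2 / (32 * σ0 ^ 2)) := by
      calc gaussDensity μ σ α * |f α|
          ≤ ((Real.sqrt (2 * Real.pi * (σ0 / 2) ^ 2))⁻¹ *
              (Real.exp (1 / (8 * σ0 ^ 2)) * Real.exp (-t ^ 2 / (16 * σ0 ^ 2)))) *
            (2 * Real.exp (|μ0| + 8 * σ0 ^ 2) * Real.exp (t ^ 2 / (32 * σ0 ^ 2))) := by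
            apply mul_le_mul hg hfb (abs_nonneg _) (by positivity)
        _ = K * Real.exp (-t ^ 2 / (16 * σ0 ^ 2) + t ^ 2 / (32 * σ0 ^ 2)) := by
            rw [hK]
            simp only [Real.exp_add]
            ring
        _ = K * Real.exp (-t ^ 2 / (32 * σ0 ^ 2)) := by
            have hσ0 : σ0 ≠ 0 := ne_of_gt hσ
            have harg : -t ^ 2 / (16 * σ0 ^ 2) + t ^ 2 / (32 * σ0 ^ 2)
                = -t ^ 2 / (32 * σ0 ^ 2) := by
              field_simp
              ring
            rw [harg]
    rw [Real.norm_eq_abs, abs_mul, abs_of_nonneg (gaussDensity_nonneg μ σ α)]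
    exact hcomb
  · -- integrability of the bound
    have h : Integrable (fun α : ℝ => Real.exp (-(1 / (32 * σ0 ^ 2)) * α ^ 2)) volume :=
      integrable_exp_neg_mul_sq (by positivity)
    have h2 := (h.comp_sub_right μ0).const_mul K
    refine h2.congr (ae_of_all _ fun α => ?_)
    show K * Real.exp (-(1 / (32 * σ0 ^ 2)) * (α - μ0) ^ 2)
        = K * Real.exp (-(α - μ0) ^ 2 / (32 * σ0 ^ 2))
    have harg : -(1 / (32 * σ0 ^ 2)) * (α - μ0) ^ 2 = -(α - μ0) ^ 2 / (32 * σ0 ^ 2) := by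
      ring
    rw [harg]
  · -- pointwise continuity in the parameters
    refine ae_of_all _ fun α => ?_
    have h1 : ContinuousAt (fun q : ℝ × ℝ => (Real.sqrt (2 * Real.pi * q.2 ^ 2))⁻¹) (μ0, σ0) := by
      apply ContinuousAt.inv₀
      · exact (Real.continuous_sqrt.comp (by fun_prop)).continuousAt
      · have : (0:ℝ) < Real.sqrt (2 * Real.pi * σ0 ^ 2) :=
          Real.sqrt_pos.mpr (by positivity)
        exact ne_of_gt this
    have h2 : ContinuousAt (fun q : ℝ × ℝ => Real.exp (-(α - q.1) ^ 2 / (2 * q.2 ^ 2)))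
        (μ0, σ0) := by
      apply Real.continuous_exp.continuousAt.comp
      apply ContinuousAt.div
      · fun_prop
      · fun_prop
      · positivity
    exact (h1.mul h2).mul continuousAt_const

lemma contAt_gaussRisk (p1 pm1 : ℝ) (L : ℝ → ℝ → ℝ)
    (hc1 : Continuous (fun α => L 1 α)) (hcm1 : Continuous (fun α => L (-1) α))
    (hb1 : ∀ α, |L 1 α| ≤ 2 * Real.exp |α|) (hbm1 : ∀ α, |L (-1) α| ≤ 2 * Real.exp |α|)
    (μ1 μm1 σ1 σm1 : ℝ) (hσ1 : 0 < σ1) (hσm1 : 0 < σm1) :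
    ContinuousAt (gaussRisk p1 pm1 L) (μ1, μm1, σ1, σm1) := by
  have hF1 := contAt_gauss_integral (fun α => L 1 α) hc1 hb1 μ1 σ1 hσ1
  have hF2 := contAt_gauss_integral (fun α => L (-1) α) hcm1 hbm1 μm1 σm1 hσm1
  have hproj1 : ContinuousAt (fun η : ℝ × ℝ × ℝ × ℝ => (η.1, η.2.2.1)) (μ1, μm1, σ1, σm1) := by
    fun_prop
  have hproj2 : ContinuousAt (fun η : ℝ × ℝ × ℝ × ℝ => (η.2.1, η.2.2.2)) (μ1, μm1, σ1, σm1) := by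
    fun_prop
  have t1 := ContinuousAt.comp (f := fun η : ℝ × ℝ × ℝ × ℝ => (η.1, η.2.2.1)) hF1 hproj1
  have t2 := ContinuousAt.comp (f := fun η : ℝ × ℝ × ℝ × ℝ => (η.2.1, η.2.2.2)) hF2 hproj2
  unfold gaussRisk
  exact (continuousAt_const.mul t1).add (continuousAt_const.mul t2)

/-- Consistency of the plug-in risk estimate: almost sure convergence of the
estimated mixture parameters implies almost sure convergence of the plug-in
risk to the true risk, for the exponential, log, or hinge loss. -/
theorem plugin_risk_consistent
    {Ω : Type*} [MeasurableSpace Ω] (P : Measure Ω) [IsProbabilityMeasure P]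
    (p1 pm1 : ℝ) (hp1 : 0 < p1) (hpm1 : 0 < pm1) (hsum : p1 + pm1 = 1) (hne : p1 ≠ pm1)
    (L : ℝ → ℝ → ℝ)
    (hL : (L = fun y α => Real.exp (-(y * α)))
        ∨ (L = fun y α => Real.log (1 + Real.exp (-(y * α))))
        ∨ (L = fun y α => max (1 - y * α) 0))
    (μ1 μm1 σ1 σm1 : ℝ) (hσ1 : 0 < σ1) (hσm1 : 0 < σm1)
    (ηhat : ℕ → Ω → ℝ × ℝ × ℝ × ℝ)
    (hconv : ∀ᵐ ω ∂P, Tendsto (fun n => ηhat n ω) atTop (nhds (μ1, μm1, σ1, σm1))) :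
    ∀ᵐ ω ∂P, Tendsto (fun n => gaussRisk p1 pm1 L (ηhat n ω)) atTop
      (nhds (gaussRisk p1 pm1 L (μ1, μm1, σ1, σm1))) := by
  have hexp_bound : ∀ x : ℝ, |x| ≤ Real.exp |x| := fun x =>
    le_trans (by linarith [Real.add_one_le_exp |x|]) le_rfl
  have hone_le : ∀ x : ℝ, (1:ℝ) ≤ Real.exp |x| := fun x =>
    Real.one_le_exp (abs_nonneg x)
  have hcont : ContinuousAt (gaussRisk p1 pm1 L) (μ1, μm1, σ1, σm1) := by
    rcases hL with hL | hL | hL <;> subst hL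
    · -- exponential loss
      refine contAt_gaussRisk _ _ _ (by fun_prop) (by fun_prop) ?_ ?_ _ _ _ _ hσ1 hσm1
      · intro α
        rw [abs_of_nonneg (Real.exp_nonneg _)]
        have : Real.exp (-(1 * α)) ≤ Real.exp |α| :=
          Real.exp_le_exp.mpr (by rw [one_mul]; exact neg_le_abs α)
        nlinarith [Real.exp_nonneg |α|]
      · intro α
        rw [abs_of_nonneg (Real.exp_nonneg _)]
        have : Real.exp (-(-1 * α)) ≤ Real.exp |α| :=
          Real.exp_le_exp.mpr (by rw [neg_mul, one_mul, neg_neg]; exact le_abs_self α)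
        nlinarith [Real.exp_nonneg |α|]
    · -- log loss
      have hcl : ∀ y : ℝ, Continuous (fun α => Real.log (1 + Real.exp (-(y * α)))) := by
        intro y
        apply Continuous.log (by fun_prop)
        intro x
        positivity
      have hbl : ∀ y α : ℝ, |y * α| = |α| →
          |Real.log (1 + Real.exp (-(y * α)))| ≤ 2 * Real.exp |α| := by
        intro y α hy
        have hpos : (0:ℝ) < 1 + Real.exp (-(y * α)) := by positivity
        have hlog_nonneg : 0 ≤ Real.log (1 + Real.exp (-(y * α))) :=
          Real.log_nonneg (by linarith [Real.exp_nonneg (-(y * α))])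
        rw [abs_of_nonneg hlog_nonneg]
        have h1 : (1:ℝ) + Real.exp (-(y * α)) ≤ 2 * Real.exp |α| := by
          have he : Real.exp (-(y * α)) ≤ Real.exp |α| := by
            apply Real.exp_le_exp.mpr
            calc -(y * α) ≤ |y * α| := neg_le_abs _
              _ = |α| := hy
          linarith [hone_le α]
        calc Real.log (1 + Real.exp (-(y * α))) ≤ Real.log (2 * Real.exp |α|) :=
              Real.log_le_log hpos h1
          _ = Real.log 2 + |α| := by rw [Real.log_mul (by norm_num) (Real.exp_ne_zero _),
              Real.log_exp]
          _ ≤ Real.exp |α| + Real.exp |α| := by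
              have : Real.log 2 ≤ 1 := by
                calc Real.log 2 ≤ Real.log (Real.exp 1) :=
                    Real.log_le_log (by norm_num) (by linarith [Real.exp_one_gt_d9])
                  _ = 1 := Real.log_exp 1
              linarith [hexp_bound α, hone_le α]
          _ = 2 * Real.exp |α| := by ring
      refine contAt_gaussRisk _ _ _ (hcl 1) (hcl (-1)) ?_ ?_ _ _ _ _ hσ1 hσm1
      · intro α; exact hbl 1 α (by rw [one_mul])
      · intro α; exact hbl (-1) α (by rw [neg_mul, one_mul, abs_neg])
    · -- hinge loss
      have hch : ∀ y : ℝ, Continuous (fun α : ℝ => max (1 - y * α) 0) := by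
        intro y
        exact Continuous.max (by fun_prop) continuous_const
      have hbh : ∀ y α : ℝ, |y * α| = |α| →
          |max (1 - y * α) 0| ≤ 2 * Real.exp |α| := by
        intro y α hy
        rw [abs_of_nonneg (le_max_right _ _)]
        have h1 : -(y * α) ≤ |α| := by
          have := neg_le_abs (y * α)
          rw [hy] at this
          exact this
        apply max_le
        · linarith [hexp_bound α, hone_le α]
        · positivity
      refine contAt_gaussRisk _ _ _ (hch 1) (hch (-1)) ?_ ?_ _ _ _ _ hσ1 hσm1
      · intro α; exact hbh 1 α (by rw [one_mul])
      · intro α; exact hbh (-1) α (by rw [neg_mul, one_mul, abs_neg])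
  filter_upwards [hconv] with ω hω
  exact (hcont.tendsto).comp hω
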